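/- Let h: ℝ₊ → ℝ be continuous, nonnegative, with h(0+) = sin(π(H - 1/2)) ∈ (0,1) for some H ∈ (3/4,1), h bounded, and h(τ) → 0 as τ → ∞. Define the operator (A_t f)(s) = (1/π) ∫₀^∞ h(τ) e^{-tτ} f(τ) / (τ + s) dτ on L²(ℝ₊). Then there exist T_min > 0 and β ∈ (0,1) such that ‖A_t f‖ ≤ (1-β)‖f‖ for all f ∈ L²(ℝ₊) and all t ≥ T_min. -/

import Mathlib

open MeasureTheory Real Set Filter
open scoped ENNReal NNReal

lemma key_integrableOn {s : ℝ} (hs : 0 < s) :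
    IntegrableOn (fun τ : ℝ => τ ^ (-(1/2) : ℝ) / (τ + s)) (Set.Ioi 0) := by
  have hmeas : Measurable (fun τ : ℝ => τ ^ (-(1/2) : ℝ) / (τ + s)) :=
    (measurable_id.pow_const _).div (measurable_id.add_const s)
  have h1 : IntegrableOn (fun τ : ℝ => τ ^ (-(1/2) : ℝ) / (τ + s)) (Set.Ioc 0 1) := by
    have hb : IntegrableOn (fun τ : ℝ => s⁻¹ * τ ^ (-(1/2) : ℝ)) (Set.Ioc 0 1) :=
      ((intervalIntegrable_iff_integrableOn_Ioc_of_le zero_le_one).mp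
        (intervalIntegral.intervalIntegrable_rpow' (by norm_num))).const_mul _
    refine hb.mono' hmeas.aestronglyMeasurable ?_
    filter_upwards [ae_restrict_mem measurableSet_Ioc] with τ hτ
    have hτ0 : 0 < τ := hτ.1
    have h1 : 0 ≤ τ ^ (-(1/2) : ℝ) := Real.rpow_nonneg hτ0.le _
    rw [Real.norm_eq_abs, abs_div, abs_of_nonneg h1, abs_of_pos (by linarith)]
    rw [div_le_iff₀ (by linarith)]
    calc τ ^ (-(1/2) : ℝ) = s⁻¹ * τ ^ (-(1/2) : ℝ) * s := by field_simp
    _ ≤ s⁻¹ * τ ^ (-(1/2) : ℝ) * (τ + s) := by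
        apply mul_le_mul_of_nonneg_left (by linarith) (by positivity)
  have h2 : IntegrableOn (fun τ : ℝ => τ ^ (-(1/2) : ℝ) / (τ + s)) (Set.Ioi 1) := by
    have hb : IntegrableOn (fun τ : ℝ => τ ^ (-(3/2) : ℝ)) (Set.Ioi 1) :=
      integrableOn_Ioi_rpow_of_lt (by norm_num) one_pos
    refine hb.mono' hmeas.aestronglyMeasurable ?_
    filter_upwards [ae_restrict_mem measurableSet_Ioi] with τ hτ
    have hτ0 : (1:ℝ) < τ := hτ
    have h1 : 0 ≤ τ ^ (-(1/2) : ℝ) := Real.rpow_nonneg (by linarith) _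
    rw [Real.norm_eq_abs, abs_div, abs_of_nonneg h1, abs_of_pos (by linarith)]
    rw [div_le_iff₀ (by linarith)]
    have h3 : τ ^ (-(1/2):ℝ) = τ ^ (-(3/2):ℝ) * τ := by
      rw [show (-(1/2):ℝ) = -(3/2) + 1 by norm_num, Real.rpow_add (by linarith), Real.rpow_one]
    have h4 : 0 ≤ τ ^ (-(3/2):ℝ) := Real.rpow_nonneg (by linarith) _
    rw [h3]; nlinarith
  have := h1.union h2
  rwa [Set.Ioc_union_Ioi_eq_Ioi zero_le_one] at this

lemma key_integral {s : ℝ} (hs : 0 < s) :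
    ∫ τ in Set.Ioi (0:ℝ), τ ^ (-(1/2) : ℝ) / (τ + s) = π * s ^ (-(1/2) : ℝ) := by
  have hsub := integral_comp_rpow_Ioi_of_pos
    (g := fun τ : ℝ => τ ^ (-(1/2):ℝ) / (τ + s)) (p := 2) two_pos
  have hcongr : ∫ x in Set.Ioi (0:ℝ),
      ((2:ℝ) * x ^ ((2:ℝ) - 1)) • ((x ^ (2:ℝ)) ^ (-(1/2):ℝ) / (x ^ (2:ℝ) + s))
      = ∫ x in Set.Ioi (0:ℝ), 2 * (x ^ 2 + s)⁻¹ := by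
    refine setIntegral_congr_fun measurableSet_Ioi (fun x hx => ?_)
    have hx0 : (0:ℝ) < x := hx
    have e1 : (x ^ (2:ℝ)) = x ^ 2 := by
      rw [← Real.rpow_natCast x 2]; norm_num
    have e2 : (x ^ (2:ℝ)) ^ (-(1/2):ℝ) = x⁻¹ := by
      rw [← Real.rpow_mul hx0.le]
      norm_num
      exact (Real.rpow_neg_one x).trans rfl
    rw [smul_eq_mul, e2, e1]
    rw [show ((2:ℝ) - 1) = 1 by norm_num, Real.rpow_one]
    field_simp
  rw [hcongr] at hsub
  -- now evaluate ∫ x in Ioi 0, 2 * (x^2+s)⁻¹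
  have hb : (0:ℝ) < (Real.sqrt s)⁻¹ := inv_pos.mpr (Real.sqrt_pos.mpr hs)
  have hscale := integral_comp_mul_left_Ioi (fun y : ℝ => (1 + y ^ 2)⁻¹) 0 hb
  simp only [mul_zero] at hscale
  rw [integral_Ioi_inv_one_add_sq, Real.arctan_zero, sub_zero] at hscale
  have hss : Real.sqrt s * Real.sqrt s = s := Real.mul_self_sqrt hs.le
  have hcongr2 : ∫ x in Set.Ioi (0:ℝ), (1 + ((Real.sqrt s)⁻¹ * x) ^ 2)⁻¹
      = ∫ x in Set.Ioi (0:ℝ), s * (x ^ 2 + s)⁻¹ := by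
    refine setIntegral_congr_fun measurableSet_Ioi (fun x hx => ?_)
    have : (1 + ((Real.sqrt s)⁻¹ * x) ^ 2) = (x ^ 2 + s) / s := by
      field_simp
      nlinarith [hss]
    rw [this]
    have hx2s : x ^ 2 + s > 0 := by positivity
    field_simp
  rw [hcongr2, integral_const_mul] at hscale
  have hI : ∫ x in Set.Ioi (0:ℝ), (x ^ 2 + s)⁻¹ = Real.sqrt s * (π / 2) / s := by
    have := hscale
    field_simp at this ⊢
    rw [smul_eq_mul] at this
    linarith [this]
  rw [← hsub, integral_const_mul, hI,
    show s ^ (-(1/2):ℝ) = (Real.sqrt s)⁻¹ by rw [Real.rpow_neg hs.le, Real.sqrt_eq_rpow]]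
  have h0 : Real.sqrt s ≠ 0 := (Real.sqrt_pos.mpr hs).ne'
  field_simp
  nlinarith [hss, Real.pi_pos]

lemma key_lintegral' {c s : ℝ} (hc : 0 ≤ c) (hs : 0 < s) :
    ∫⁻ τ in Set.Ioi (0:ℝ),
        ENNReal.ofReal (c / (τ + s)) * ENNReal.ofReal (τ ^ (-(1/2):ℝ))
      = ENNReal.ofReal c * ENNReal.ofReal π * ENNReal.ofReal (s ^ (-(1/2):ℝ)) := by
  have h1 : ∀ τ ∈ Set.Ioi (0:ℝ),
      ENNReal.ofReal (c / (τ + s)) * ENNReal.ofReal (τ ^ (-(1/2):ℝ))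
        = ENNReal.ofReal c * ENNReal.ofReal (τ ^ (-(1/2):ℝ) / (τ + s)) := by
    intro τ hτ
    have hτ0 : (0:ℝ) < τ := hτ
    rw [← ENNReal.ofReal_mul (by positivity), ← ENNReal.ofReal_mul hc]
    congr 1
    field_simp
  rw [setLIntegral_congr_fun measurableSet_Ioi h1]
  rw [lintegral_const_mul' _ _ ENNReal.ofReal_ne_top]
  rw [← ofReal_integral_eq_lintegral_ofReal (key_integrableOn hs)
    ((ae_restrict_iff' measurableSet_Ioi).mpr (ae_of_all _ fun τ hτ =>
      by
      have hτ0 : (0:ℝ) < τ := hτ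
      positivity))]
  rw [key_integral hs, ENNReal.ofReal_mul Real.pi_pos.le, mul_assoc]

lemma contraction_core {c : ℝ} (hc : 0 < c) (k : ℝ → ℝ)
    (hk : ∀ τ : ℝ, 0 < τ → |k τ| ≤ c)
    (f : ℝ → ℝ) (hf : MemLp f 2 (volume.restrict (Set.Ioi 0))) :
    eLpNorm (fun s : ℝ => (1/Real.pi) * ∫ τ in Set.Ioi (0:ℝ), k τ * f τ / (τ + s)) 2
        (volume.restrict (Set.Ioi 0))
      ≤ ENNReal.ofReal c * eLpNorm f 2 (volume.restrict (Set.Ioi 0)) := by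
  obtain ⟨f', hf'm, hff'⟩ := hf.1.aemeasurable
  set μ := volume.restrict (Set.Ioi (0:ℝ)) with hμ
  set g : ℝ → ℝ := fun s => (1/Real.pi) * ∫ τ in Set.Ioi (0:ℝ), k τ * f τ / (τ + s) with hg
  set φ : ℝ → ℝ≥0∞ := fun τ => ENNReal.ofReal |f' τ| with hφ
  have hφm : Measurable φ := hf'm.abs.ennreal_ofReal
  set A : ℝ → ℝ → ℝ≥0∞ := fun s τ => ENNReal.ofReal (c / (τ + s)) with hA
  set w : ℝ → ℝ≥0∞ := fun τ => ENNReal.ofReal (τ ^ (-(1/2):ℝ)) with hw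
  set w' : ℝ → ℝ≥0∞ := fun τ => ENNReal.ofReal (τ ^ ((1/2):ℝ)) with hw'
  set K : ℝ≥0∞ := ENNReal.ofReal c * ENNReal.ofReal π with hK
  set I : ℝ → ℝ≥0∞ := fun s => ∫⁻ τ in Set.Ioi (0:ℝ), A s τ * w' τ * (φ τ) ^ (2:ℝ) with hI
  have hwm : Measurable w := (measurable_id.pow_const _).ennreal_ofReal
  have hw'm : Measurable w' := (measurable_id.pow_const _).ennreal_ofReal
  have hAm : ∀ s : ℝ, Measurable (fun τ => A s τ) :=
    fun s => (measurable_const.div (measurable_id.add_const s)).ennreal_ofReal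
  -- Step A+B : pointwise bound on ‖g s‖
  have stepAB : ∀ s : ℝ, 0 < s →
      (‖g s‖₊ : ℝ≥0∞) ≤ ENNReal.ofReal (1/π) * ((K * w s) ^ ((1:ℝ)/2) * (I s) ^ ((1:ℝ)/2)) := by
    intro s hs
    have e1 : (‖g s‖₊ : ℝ≥0∞)
        = ENNReal.ofReal (1/π) * ↑‖∫ τ in Set.Ioi (0:ℝ), k τ * f τ / (τ + s)‖₊ := by
      rw [hg]
      simp only [nnnorm_mul, ENNReal.coe_mul]
      congr 1
      exact Real.enorm_eq_ofReal (by positivity)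
    have e2 : (‖∫ τ in Set.Ioi (0:ℝ), k τ * f τ / (τ + s)‖₊ : ℝ≥0∞)
        ≤ ∫⁻ τ in Set.Ioi (0:ℝ), ‖k τ * f τ / (τ + s)‖₊ :=
      enorm_integral_le_lintegral_enorm _
    have e3 : (∫⁻ τ in Set.Ioi (0:ℝ), ‖k τ * f τ / (τ + s)‖₊)
        ≤ ∫⁻ τ in Set.Ioi (0:ℝ), A s τ * φ τ := by
      refine lintegral_mono_ae ?_
      filter_upwards [ae_restrict_mem measurableSet_Ioi, hff'] with τ hτ hfτ
      have hτ0 : (0:ℝ) < τ := hτ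
      rw [← enorm_eq_nnnorm, Real.enorm_eq_ofReal_abs]
      have habs : |k τ * f τ / (τ + s)| ≤ c / (τ + s) * |f' τ| := by
        rw [← hfτ, abs_div, abs_mul, abs_of_pos (show (0:ℝ) < τ + s by linarith)]
        calc |k τ| * |f τ| / (τ + s) ≤ c * |f τ| / (τ + s) := by
              gcongr
              exact hk τ hτ0
        _ = c / (τ + s) * |f τ| := by ring
      refine le_trans (ENNReal.ofReal_le_ofReal habs) ?_
      rw [ENNReal.ofReal_mul (by positivity)]
    calc (‖g s‖₊ : ℝ≥0∞) = ENNReal.ofReal (1/π) * ↑‖∫ τ in Set.Ioi (0:ℝ), k τ * f τ / (τ + s)‖₊ := e1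
    _ ≤ ENNReal.ofReal (1/π) * ∫⁻ τ in Set.Ioi (0:ℝ), A s τ * φ τ :=
        mul_le_mul_right (e2.trans e3) _
    _ ≤ ENNReal.ofReal (1/π) * ((K * w s) ^ ((1:ℝ)/2) * (I s) ^ ((1:ℝ)/2)) := by
        refine mul_le_mul_right ?_ _
        -- Cauchy-Schwarz
        set u : ℝ → ℝ≥0∞ := fun τ => (A s τ * w τ) ^ ((1:ℝ)/2) with hu
        set v : ℝ → ℝ≥0∞ := fun τ => (A s τ * w' τ) ^ ((1:ℝ)/2) * φ τ with hv
        have hum : Measurable u := ((hAm s).mul hwm).pow measurable_const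
        have hvm : Measurable v := (((hAm s).mul hw'm).pow measurable_const).mul hφm
        have hconj : Real.HolderConjugate 2 2 := Real.HolderConjugate.two_two
        have hcs := ENNReal.lintegral_mul_le_Lp_mul_Lq μ hconj hum.aemeasurable hvm.aemeasurable
        have huv : ∫⁻ τ, (u * v) τ ∂μ = ∫⁻ τ in Set.Ioi (0:ℝ), A s τ * φ τ := by
          rw [hμ]
          refine setLIntegral_congr_fun measurableSet_Ioi (fun τ hτ => ?_)
          have hτ0 : (0:ℝ) < τ := hτ
          show (A s τ * w τ) ^ ((1:ℝ)/2) * ((A s τ * w' τ) ^ ((1:ℝ)/2) * φ τ) = A s τ * φ τ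
          rw [← mul_assoc, ← ENNReal.mul_rpow_of_nonneg _ _ (by norm_num : (0:ℝ) ≤ 1/2)]
          have : A s τ * w τ * (A s τ * w' τ) = (A s τ * A s τ) * (w τ * w' τ) := by ring
          rw [this]
          have hww : w τ * w' τ = 1 := by
            rw [hw, hw', ← ENNReal.ofReal_mul (Real.rpow_nonneg hτ0.le _),
              ← Real.rpow_add hτ0]
            norm_num
          rw [hww, mul_one, ← pow_two, ← ENNReal.rpow_two, ← ENNReal.rpow_mul]
          norm_num
        have hu2 : ∫⁻ τ, u τ ^ (2:ℝ) ∂μ = K * w s := by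
          have : ∀ τ : ℝ, u τ ^ (2:ℝ) = A s τ * w τ := by
            intro τ
            rw [hu, ← ENNReal.rpow_mul]
            norm_num
          rw [lintegral_congr this, hμ, hK, hw]
          exact key_lintegral' hc.le hs
        have hv2 : ∫⁻ τ, v τ ^ (2:ℝ) ∂μ = I s := by
          have : ∀ τ : ℝ, v τ ^ (2:ℝ) = A s τ * w' τ * φ τ ^ (2:ℝ) := by
            intro τ
            rw [hv, ENNReal.mul_rpow_of_nonneg _ _ (by norm_num : (0:ℝ) ≤ 2),
              ← ENNReal.rpow_mul]
            norm_num
          rw [lintegral_congr this, hI, hμ]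
        rw [huv, hu2, hv2] at hcs
        exact hcs
  set CP : ℝ≥0∞ := ENNReal.ofReal (1/π) with hCP
  have hsq : ∀ x : ℝ≥0∞, (x ^ ((1:ℝ)/2)) ^ (2:ℝ) = x := by
    intro x; rw [← ENNReal.rpow_mul]; norm_num
  have hsq2 : ∀ x : ℝ≥0∞, (x ^ (2:ℝ)) ^ ((1:ℝ)/2) = x := by
    intro x; rw [← ENNReal.rpow_mul]; norm_num
  have stepC : ∀ s : ℝ, 0 < s →
      (‖g s‖₊ : ℝ≥0∞) ^ (2:ℝ) ≤ CP ^ (2:ℝ) * K * (w s * I s) := by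
    intro s hs
    refine (ENNReal.rpow_le_rpow (stepAB s hs) (by norm_num : (0:ℝ) ≤ 2)).trans_eq ?_
    rw [ENNReal.mul_rpow_of_nonneg _ _ (by norm_num : (0:ℝ) ≤ 2),
      ENNReal.mul_rpow_of_nonneg _ _ (by norm_num : (0:ℝ) ≤ 2), hsq, hsq]
    simp only [mul_assoc]
  have hfin : CP ^ (2:ℝ) * K ≠ ⊤ :=
    ENNReal.mul_ne_top
      (ENNReal.rpow_ne_top_of_nonneg (by norm_num) ENNReal.ofReal_ne_top)
      (ENNReal.mul_ne_top ENNReal.ofReal_ne_top ENNReal.ofReal_ne_top)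
  have hD : ∫⁻ s, (‖g s‖₊ : ℝ≥0∞) ^ (2:ℝ) ∂μ
      ≤ CP ^ (2:ℝ) * K * ∫⁻ s, w s * I s ∂μ := by
    rw [← lintegral_const_mul' _ _ hfin]
    refine lintegral_mono_ae ?_
    filter_upwards [ae_restrict_mem measurableSet_Ioi] with s hs
    exact stepC s hs
  have hswap : ∫⁻ s, w s * I s ∂μ = K * ∫⁻ τ, (φ τ) ^ (2:ℝ) ∂μ := by
    have h1 : ∀ s : ℝ, w s * I s
        = ∫⁻ τ in Set.Ioi (0:ℝ), w s * (A s τ * w' τ * (φ τ) ^ (2:ℝ)) := by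
      intro s
      rw [hI]
      exact (lintegral_const_mul' _ _ ENNReal.ofReal_ne_top).symm
    rw [lintegral_congr h1]
    have hFm : AEMeasurable
        (Function.uncurry fun s τ => w s * (A s τ * w' τ * (φ τ) ^ (2:ℝ))) (μ.prod μ) := by
      apply Measurable.aemeasurable
      have m1 : Measurable fun p : ℝ × ℝ => w p.1 := hwm.comp measurable_fst
      have m2 : Measurable fun p : ℝ × ℝ => A p.1 p.2 :=
        (measurable_const.div (measurable_snd.add measurable_fst)).ennreal_ofReal
      have m3 : Measurable fun p : ℝ × ℝ => w' p.2 := hw'm.comp measurable_snd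
      have m4 : Measurable fun p : ℝ × ℝ => (φ p.2) ^ (2:ℝ) :=
        (hφm.comp measurable_snd).pow measurable_const
      exact m1.mul ((m2.mul m3).mul m4)
    rw [lintegral_lintegral_swap hFm]
    have h2 : ∫⁻ τ, (∫⁻ s, w s * (A s τ * w' τ * (φ τ) ^ (2:ℝ)) ∂μ) ∂μ
        = ∫⁻ τ, K * (φ τ) ^ (2:ℝ) ∂μ := by
      refine lintegral_congr_ae ?_
      filter_upwards [ae_restrict_mem measurableSet_Ioi] with τ hτ
      have hτ0 : (0:ℝ) < τ := hτ
      have e : ∀ s : ℝ, w s * (A s τ * w' τ * (φ τ) ^ (2:ℝ))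
          = (w' τ * (φ τ) ^ (2:ℝ))
            * (ENNReal.ofReal (c / (s + τ)) * ENNReal.ofReal (s ^ (-(1/2):ℝ))) := by
        intro s
        rw [hA, hw]
        dsimp only
        rw [add_comm τ s]
        ring
      have hfin2 : w' τ * (φ τ) ^ (2:ℝ) ≠ ⊤ :=
        ENNReal.mul_ne_top ENNReal.ofReal_ne_top
          (ENNReal.rpow_ne_top_of_nonneg (by norm_num) ENNReal.ofReal_ne_top)
      rw [lintegral_congr e, lintegral_const_mul' _ _ hfin2, hμ,
        key_lintegral' hc.le hτ0]
      have hww : w' τ * w τ = 1 := by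
        rw [hw, hw']
        dsimp only
        rw [← ENNReal.ofReal_mul (Real.rpow_nonneg hτ0.le _), ← Real.rpow_add hτ0]
        norm_num
      calc (w' τ * (φ τ) ^ (2:ℝ))
            * (ENNReal.ofReal c * ENNReal.ofReal π * ENNReal.ofReal (τ ^ (-(1/2):ℝ)))
          = K * (φ τ) ^ (2:ℝ) * (w' τ * w τ) := by rw [hK, hw]; ring
        _ = K * (φ τ) ^ (2:ℝ) := by rw [hww, mul_one]
    have hKfin : K ≠ ⊤ := by
      rw [hK]
      exact ENNReal.mul_ne_top ENNReal.ofReal_ne_top ENNReal.ofReal_ne_top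
    rw [h2, lintegral_const_mul' _ _ hKfin]
  have hX : CP * K = ENNReal.ofReal c := by
    rw [hCP, hK, ← ENNReal.ofReal_mul (by positivity), ← ENNReal.ofReal_mul (by positivity)]
    congr 1
    field_simp
  have hEf : ∫⁻ τ, (φ τ) ^ (2:ℝ) ∂μ = ∫⁻ τ, (‖f τ‖₊ : ℝ≥0∞) ^ (2:ℝ) ∂μ := by
    refine lintegral_congr_ae ?_
    filter_upwards [hff'] with τ hτ
    rw [hφ]
    dsimp only
    rw [hτ, ← Real.enorm_eq_ofReal_abs, enorm_eq_nnnorm]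
  have hfinal : ∫⁻ s, (‖g s‖₊ : ℝ≥0∞) ^ (2:ℝ) ∂μ
      ≤ (ENNReal.ofReal c) ^ (2:ℝ) * ∫⁻ τ, (‖f τ‖₊ : ℝ≥0∞) ^ (2:ℝ) ∂μ := by
    refine hD.trans ?_
    rw [hswap, hEf, ← hX, ENNReal.mul_rpow_of_nonneg _ _ (by norm_num : (0:ℝ) ≤ 2)]
    apply le_of_eq
    rw [ENNReal.rpow_two, ENNReal.rpow_two]
    ring
  have hg2 : eLpNorm g 2 μ = (∫⁻ s, (‖g s‖₊ : ℝ≥0∞) ^ (2:ℝ) ∂μ) ^ ((1:ℝ)/2) := by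
    rw [eLpNorm_eq_lintegral_rpow_enorm_toReal two_ne_zero ENNReal.ofNat_ne_top]
    norm_num
    simp only [enorm_eq_nnnorm]
  have hf2 : eLpNorm f 2 μ = (∫⁻ τ, (‖f τ‖₊ : ℝ≥0∞) ^ (2:ℝ) ∂μ) ^ ((1:ℝ)/2) := by
    rw [eLpNorm_eq_lintegral_rpow_enorm_toReal two_ne_zero ENNReal.ofNat_ne_top]
    norm_num
    simp only [enorm_eq_nnnorm]
  rw [hg2, hf2]
  refine (ENNReal.rpow_le_rpow hfinal (by norm_num : (0:ℝ) ≤ 1/2)).trans_eq ?_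
  rw [ENNReal.mul_rpow_of_nonneg _ _ (by norm_num : (0:ℝ) ≤ 1/2), hsq2]

/-- the operator (A_t f)(s) = (1/π)∫₀^∞ h(τ)e^{-tτ} f(τ)/(τ+s) dτ is a
uniform contraction on L²(ℝ₊) for all large t. -/
theorem stmt_8 (H : ℝ) (hH : H ∈ Set.Ioo (3/4 : ℝ) 1) (h : ℝ → ℝ)
    (hcont : ContinuousOn h (Set.Ioi 0))
    (hnonneg : ∀ τ : ℝ, 0 < τ → 0 ≤ h τ)
    (h0 : Filter.Tendsto h (nhdsWithin 0 (Set.Ioi 0)) (nhds (Real.sin (Real.pi * (H - 1/2)))))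
    (h01 : Real.sin (Real.pi * (H - 1/2)) ∈ Set.Ioo (0:ℝ) 1)
    (M : ℝ) (hM : ∀ τ : ℝ, 0 < τ → h τ ≤ M)
    (hinf : Filter.Tendsto h Filter.atTop (nhds 0)) :
    ∃ Tmin > (0:ℝ), ∃ β ∈ Set.Ioo (0:ℝ) 1, ∀ t : ℝ, Tmin ≤ t →
      ∀ f : ℝ → ℝ, MemLp f 2 (volume.restrict (Set.Ioi 0)) →
        eLpNorm (fun s : ℝ => (1/Real.pi) * ∫ τ in Set.Ioi (0:ℝ),
            h τ * Real.exp (-t * τ) * f τ / (τ + s)) 2 (volume.restrict (Set.Ioi 0))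
          ≤ ENNReal.ofReal (1 - β) * eLpNorm f 2 (volume.restrict (Set.Ioi 0)) := by
  obtain ⟨hL0, hL1⟩ := h01
  set L := Real.sin (Real.pi * (H - 1/2)) with hL
  set C : ℝ := (1 + L) / 2 with hC
  have hC0 : 0 < C := by rw [hC]; linarith
  have hC1 : C < 1 := by rw [hC]; linarith
  have hM0 : 0 ≤ M := le_trans (hnonneg 1 one_pos) (hM 1 one_pos)
  -- find δ
  have hev : ∀ᶠ τ in nhdsWithin 0 (Set.Ioi 0), h τ < C :=
    h0.eventually_lt_const (by rw [hC]; linarith)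
  rw [eventually_nhdsWithin_iff] at hev
  rw [Metric.eventually_nhds_iff] at hev
  obtain ⟨δ, hδ0, hδ⟩ := hev
  -- choose Tmin
  set Tmin : ℝ := max 1 (Real.log ((M + 1) / C) / δ) with hT
  refine ⟨Tmin, lt_of_lt_of_le one_pos (le_max_left _ _), (1 - L)/2, ⟨by linarith, by linarith⟩,
    ?_⟩
  intro t ht f hf
  have h1β : 1 - (1 - L)/2 = C := by rw [hC]; ring
  rw [h1β]
  have ht1 : (1:ℝ) ≤ t := le_trans (le_max_left _ _) ht
  have hbd : ∀ τ : ℝ, 0 < τ → |h τ * Real.exp (-t * τ)| ≤ C := by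
    intro τ hτ0
    have hh0 : 0 ≤ h τ := hnonneg τ hτ0
    rw [abs_of_nonneg (mul_nonneg hh0 (Real.exp_pos _).le)]
    rcases lt_or_ge τ δ with hcase | hcase
    · have hdist : dist τ 0 < δ := by
        rw [Real.dist_eq, sub_zero, abs_of_pos hτ0]
        exact hcase
      have hhτ : h τ < C := hδ hdist hτ0
      calc h τ * Real.exp (-t * τ) ≤ h τ * 1 := by
            apply mul_le_mul_of_nonneg_left _ hh0
            rw [Real.exp_le_one_iff]
            nlinarith
      _ ≤ C := by rw [mul_one]; exact hhτ.le
    · have hexp : Real.exp (-t * τ) ≤ C / (M + 1) := by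
        have hlog : Real.log ((M + 1) / C) ≤ t * δ := by
          have h2 : Real.log ((M + 1) / C) / δ ≤ t := le_trans (le_max_right _ _) ht
          calc Real.log ((M + 1) / C) = Real.log ((M + 1) / C) / δ * δ := by
                field_simp
          _ ≤ t * δ := by nlinarith
        have h3 : -t * τ ≤ -Real.log ((M + 1) / C) := by nlinarith
        calc Real.exp (-t * τ) ≤ Real.exp (-Real.log ((M + 1) / C)) := Real.exp_le_exp.mpr h3
        _ = C / (M + 1) := by
            rw [Real.exp_neg, Real.exp_log (by positivity)]
            rw [inv_div]
      calc h τ * Real.exp (-t * τ) ≤ (M + 1) * (C / (M + 1)) := by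
            apply mul_le_mul (by linarith [hM τ hτ0]) hexp (Real.exp_pos _).le (by linarith)
      _ = C := by field_simp
  exact contraction_core hC0 (fun τ => h τ * Real.exp (-t * τ)) hbd f hf
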